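/- arXiv:0803.1296 — 5 statements merged into one kernel-verified Lean document; each statement's English description precedes it below -/
import Mathlib

section
/- Fix δ > 0 and Δ ∈ ℝ, and define in ℝ⁴ the points u = (1,0,0,Δ), v = (1,1,0,Δ), w = (0,1,0,Δ), p = (0,0,0,Δ+δ), and c = (1/2, 1/2, δ/2, Δ+δ/2). Then the set of points x ∈ ℝ⁴ satisfying ‖x − u‖ = ‖x − v‖ = ‖x − w‖ = ‖x − p‖ is exactly the line { c + s·(0,0,1,0) : s ∈ ℝ }. -/
noncomputable def pt (a b c d : ℝ) : EuclideanSpace ℝ (Fin 4) := !₂[a, b, c, d]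

lemma norm_eq_iff_sum_sq (x y : EuclideanSpace ℝ (Fin 4)) :
    ‖x‖ = ‖y‖ ↔ ∑ i, (x i)^2 = ∑ i, (y i)^2 := by
  rw [EuclideanSpace.norm_eq, EuclideanSpace.norm_eq]
  simp only [Real.norm_eq_abs, sq_abs]
  rw [Real.sqrt_inj (by positivity) (by positivity)]

/-- The set of points equidistant from `u = (1,0,0,Δ)`, `v = (1,1,0,Δ)`, `w = (0,1,0,Δ)`,
`p = (0,0,0,Δ+δ)` is the line through `c = (1/2,1/2,δ/2,Δ+δ/2)` in direction `(0,0,1,0)`. -/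
theorem equidistant_set_is_line (Δ δ : ℝ) (hδ : 0 < δ) :
    {x : EuclideanSpace ℝ (Fin 4) |
        ‖x - pt 1 0 0 Δ‖ = ‖x - pt 1 1 0 Δ‖ ∧
        ‖x - pt 1 1 0 Δ‖ = ‖x - pt 0 1 0 Δ‖ ∧
        ‖x - pt 0 1 0 Δ‖ = ‖x - pt 0 0 0 (Δ + δ)‖}
      = {x : EuclideanSpace ℝ (Fin 4) |
          ∃ s : ℝ, x = pt (1/2) (1/2) (δ/2) (Δ + δ/2) + s • pt 0 0 1 0} := by
  ext x
  simp only [Set.mem_setOf_eq, norm_eq_iff_sum_sq, Fin.sum_univ_four, pt,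
    PiLp.sub_apply, PiLp.toLp_apply, Matrix.cons_val_zero, Matrix.cons_val_one, Matrix.head_cons,
    Matrix.cons_val_two, Matrix.tail_cons, Matrix.cons_val_three]
  constructor
  · rintro ⟨h1, h2, h3⟩
    refine ⟨x 2 - δ/2, PiLp.ext fun i => ?_⟩
    have e1 : x 1 = 1/2 := by nlinarith [h1]
    have e0 : x 0 = 1/2 := by nlinarith [h2]
    have e3 : x 3 = Δ + δ/2 := by nlinarith [h3]
    fin_cases i <;>
      simp [pt, PiLp.add_apply, PiLp.smul_apply, e0, e1, e3]
  · rintro ⟨s, rfl⟩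
    simp only [pt, PiLp.add_apply, PiLp.smul_apply, PiLp.toLp_apply, Matrix.cons_val_zero,
      Matrix.cons_val_one, Matrix.head_cons, Matrix.cons_val_two, Matrix.tail_cons,
      Matrix.cons_val_three, smul_eq_mul]
    refine ⟨by ring, by ring, by ring⟩
end

section
/- For every δ > 0 and every Δ ∈ ℝ, the five points p = (0,0,0,Δ+δ), u = (1,0,0,Δ), v = (1,1,0,Δ), w = (0,1,0,Δ), q = ((1+√2)/2, 1/2, δ², Δ+δ) of ℝ⁴ are affinely independent. -/
/-- The five points `p, u, v, w, q` are affinely independent. -/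
theorem puvwq_affineIndependent (Δ δ : ℝ) (hδ : 0 < δ) :
    AffineIndependent ℝ
      ![pt 0 0 0 (Δ + δ), pt 1 0 0 Δ, pt 1 1 0 Δ, pt 0 1 0 Δ,
        pt ((1 + Real.sqrt 2)/2) (1/2) (δ^2) (Δ + δ)] := by
  rw [affineIndependent_iff_linearIndependent_vsub ℝ _ 0]
  set M : Matrix (Fin 4) (Fin 4) ℝ :=
    !![1, 0, 0, -δ; 1, 1, 0, -δ; 0, 1, 0, -δ; (1 + Real.sqrt 2)/2, 1/2, δ^2, 0] with hM
  have hdet : M.det = δ^3 := by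
    simp [hM, Matrix.det_succ_row_zero, Fin.sum_univ_succ, Fin.castSucc, Fin.castAdd,
      Fin.castLE, Fin.succAbove]
    ring
  have hLI : LinearIndependent ℝ (fun i ↦ M i) :=
    Matrix.linearIndependent_rows_iff_isUnit.2
      (Matrix.isUnit_iff_isUnit_det M |>.2 (by rw [hdet]; exact (pow_pos hδ 3).ne'.isUnit))
  have hLI' := hLI.comp (fun i : {x : Fin 5 // x ≠ 0} => i.1.pred i.2)
    (fun a b hab => Subtype.ext ((Fin.pred_inj (ha := a.2) (hb := b.2)).1 hab))
  convert hLI'.map' (WithLp.linearEquiv 2 ℝ (Fin 4 → ℝ)).symm.toLinearMap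
    (LinearEquiv.ker _) using 1
  funext i
  have : (i : Fin 5) ≠ 0 := i.2
  fin_cases i <;>
    · ext j
      fin_cases j <;>
        · simp only [pt, M, Function.comp, Fin.pred, Fin.subNat, Fin.isValue]
          norm_num
end

section
/- Fix Δ ∈ ℝ and 0 < δ < 1. The circumcenter of the 4-simplex in ℝ⁴ with vertices p = (0,0,0,Δ+δ), u = (1,0,0,Δ), v = (1,1,0,Δ), w = (0,1,0,Δ), q = ((1+√2)/2, 1/2, δ², Δ+δ) is the point c' = (1/2, 1/2, δ²/2, Δ+δ/2), and its circumradius equals √(1/2 + δ²/4 + δ⁴/4), which is strictly less than 1. -/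
lemma dist_pt (a b c d a' b' c' d' : ℝ) :
    dist (pt a b c d) (pt a' b' c' d')
      = Real.sqrt ((a - a')^2 + (b - b')^2 + (c - c')^2 + (d - d')^2) := by
  rw [EuclideanSpace.dist_eq]
  congr 1
  simp [pt, Fin.sum_univ_four, Real.dist_eq, sq_abs]

/-- The circumcenter of the 4-simplex `[p, u, v, w, q]` is `c' = (1/2, 1/2, δ²/2, Δ+δ/2)`,
and its circumradius is `√(1/2 + δ²/4 + δ⁴/4) < 1` (for `0 < δ < 1`). -/
theorem circumcenter_puvwq (Δ δ : ℝ) (hδ0 : 0 < δ) (hδ1 : δ < 1)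
    (h : AffineIndependent ℝ
      ![pt 0 0 0 (Δ + δ), pt 1 0 0 Δ, pt 1 1 0 Δ, pt 0 1 0 Δ,
        pt ((1 + Real.sqrt 2)/2) (1/2) (δ^2) (Δ + δ)]) :
    (⟨_, h⟩ : Affine.Simplex ℝ (EuclideanSpace ℝ (Fin 4)) 4).circumcenter
      = pt (1/2) (1/2) (δ^2/2) (Δ + δ/2) ∧
    (⟨_, h⟩ : Affine.Simplex ℝ (EuclideanSpace ℝ (Fin 4)) 4).circumradius
      = Real.sqrt (1/2 + δ^2/4 + δ^4/4) ∧
    Real.sqrt (1/2 + δ^2/4 + δ^4/4) < 1 := by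
  set s : Affine.Simplex ℝ (EuclideanSpace ℝ (Fin 4)) 4 := ⟨_, h⟩
  have hspan : affineSpan ℝ (Set.range s.points) = ⊤ := by
    rw [h.affineSpan_eq_top_iff_card_eq_finrank_add_one]
    simp
  have hmem : pt (1/2) (1/2) (δ^2/2) (Δ + δ/2) ∈ affineSpan ℝ (Set.range s.points) := by
    rw [hspan]; trivial
  have h2 : ((Real.sqrt 2) / 2) ^ 2 = 1/2 := by
    rw [div_pow, Real.sq_sqrt (by norm_num : (2:ℝ) ≥ 0)]; norm_num
  have hr : ∀ i, dist (s.points i) (pt (1/2) (1/2) (δ^2/2) (Δ + δ/2))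
      = Real.sqrt (1/2 + δ^2/4 + δ^4/4) := by
    intro i
    fin_cases i
    · show dist (pt 0 0 0 (Δ + δ)) (pt (1/2) (1/2) (δ^2/2) (Δ + δ/2)) = _
      rw [dist_pt]; congr 1; ring
    · show dist (pt 1 0 0 Δ) (pt (1/2) (1/2) (δ^2/2) (Δ + δ/2)) = _
      rw [dist_pt]; congr 1; ring
    · show dist (pt 1 1 0 Δ) (pt (1/2) (1/2) (δ^2/2) (Δ + δ/2)) = _
      rw [dist_pt]; congr 1; ring
    · show dist (pt 0 1 0 Δ) (pt (1/2) (1/2) (δ^2/2) (Δ + δ/2)) = _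
      rw [dist_pt]; congr 1; ring
    · show dist (pt ((1 + Real.sqrt 2)/2) (1/2) (δ^2) (Δ + δ))
          (pt (1/2) (1/2) (δ^2/2) (Δ + δ/2)) = _
      rw [dist_pt]; congr 1; linear_combination h2
  refine ⟨(s.eq_circumcenter_of_dist_eq hmem hr).symm,
    (s.eq_circumradius_of_dist_eq hmem hr).symm, ?_⟩
  have : (1/2 + δ^2/4 + δ^4/4 : ℝ) < 1 := by nlinarith [pow_lt_one₀ hδ0.le hδ1 (by norm_num : 2 ≠ 0), pow_lt_one₀ hδ0.le hδ1 (by norm_num : 4 ≠ 0)]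
  calc Real.sqrt (1/2 + δ^2/4 + δ^4/4) < Real.sqrt 1 := by
        apply Real.sqrt_lt_sqrt (by positivity) this
    _ = 1 := Real.sqrt_one
end

section
/- Fix Δ ∈ ℝ and δ > 0, and define in ℝ⁴ the points p = (0,0,0,Δ+δ), u = (1,0,0,Δ), v = (1,1,0,Δ), w = (0,1,0,Δ), q = ((1+√2)/2, 1/2, δ², Δ+δ), and c_puvq = (1/2 + δ²(δ²+1)/(1+√2), 1/2, −1/2, Δ + δ/2 + δ(δ²+1)/(1+√2)). Then ‖c_puvq − p‖ = ‖c_puvq − u‖ = ‖c_puvq − v‖ = ‖c_puvq − q‖, and moreover ‖c_puvq − p‖ < ‖c_puvq − w‖. -/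
noncomputable def cpuvq (Δ δ : ℝ) : EuclideanSpace ℝ (Fin 4) :=
  pt (1/2 + δ^2 * (δ^2 + 1) / (1 + Real.sqrt 2)) (1/2) (-(1/2))
     (Δ + δ/2 + δ * (δ^2 + 1) / (1 + Real.sqrt 2))

lemma norm_pt_sub (a b c d e f g h : ℝ) :
    ‖pt a b c d - pt e f g h‖ = Real.sqrt ((a-e)^2 + (b-f)^2 + (c-g)^2 + (d-h)^2) := by
  rw [EuclideanSpace.norm_eq]
  congr 1
  simp [pt, Fin.sum_univ_four, Real.norm_eq_abs, sq_abs]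

/-- `c_puvq` is equidistant from `p`, `u`, `v`, `q`, and strictly closer to them
than to `w`. -/
theorem cpuvq_equidistant (Δ δ : ℝ) (hδ : 0 < δ) :
    ‖cpuvq Δ δ - pt 0 0 0 (Δ + δ)‖ = ‖cpuvq Δ δ - pt 1 0 0 Δ‖ ∧
    ‖cpuvq Δ δ - pt 1 0 0 Δ‖ = ‖cpuvq Δ δ - pt 1 1 0 Δ‖ ∧
    ‖cpuvq Δ δ - pt 1 1 0 Δ‖
      = ‖cpuvq Δ δ - pt ((1 + Real.sqrt 2)/2) (1/2) (δ^2) (Δ + δ)‖ ∧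
    ‖cpuvq Δ δ - pt 0 0 0 (Δ + δ)‖ < ‖cpuvq Δ δ - pt 0 1 0 Δ‖ := by
  have hspos : (0:ℝ) < Real.sqrt 2 := Real.sqrt_pos.mpr (by norm_num)
  set s := Real.sqrt 2 with hsdef
  have hs : s ^ 2 = 2 := Real.sq_sqrt (by norm_num)
  have hs1 : (1 : ℝ) + s ≠ 0 := by positivity
  rw [cpuvq, norm_pt_sub, norm_pt_sub, norm_pt_sub, norm_pt_sub, norm_pt_sub]
  set A := δ^2 * (δ^2 + 1) / (1 + s) with hAdef
  set B := δ * (δ^2 + 1) / (1 + s) with hBdef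
  have hAB : A = δ * B := by rw [hAdef, hBdef]; ring
  have hA : A * (1 + s) = δ^2 * (δ^2 + 1) := div_mul_cancel₀ _ hs1
  have hBpos : 0 < B := by rw [hBdef]; positivity
  refine ⟨?_, ?_, ?_, ?_⟩
  · congr 1
    linear_combination 2 * hAB
  · congr 1
    ring
  · congr 1
    linear_combination hA - (1/4)*hs + 2*δ*hAB
  · apply Real.sqrt_lt_sqrt
    · positivity
    · nlinarith [hBpos, hδ]
end

section
/- Fix Δ ∈ ℝ and 0 < δ < 1, and define in ℝ⁴ the points c' = (1/2, 1/2, δ²/2, Δ+δ/2), c_puvq = (1/2 + δ²(δ²+1)/(1+√2), 1/2, −1/2, Δ + δ/2 + δ(δ²+1)/(1+√2)), and c_pvwq = (1/2, 1/2 + δ²(δ²+1), −1/2, Δ + δ/2 + δ(δ²+1)). Then the absolute value of the fourth (t-) coordinate of c_puvq − c' is at most 4δ·‖c_puvq − c'‖, and the absolute value of the fourth coordinate of c_pvwq − c' is at most 4δ·‖c_pvwq − c'‖. -/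
noncomputable def c' (Δ δ : ℝ) : EuclideanSpace ℝ (Fin 4) :=
  pt (1/2) (1/2) (δ^2/2) (Δ + δ/2)

noncomputable def cpvwq (Δ δ : ℝ) : EuclideanSpace ℝ (Fin 4) :=
  pt (1/2) (1/2 + δ^2 * (δ^2 + 1)) (-(1/2)) (Δ + δ/2 + δ * (δ^2 + 1))

lemma coord_le_norm (v : EuclideanSpace ℝ (Fin 4)) (i : Fin 4) : |v i| ≤ ‖v‖ := by
  rw [EuclideanSpace.norm_eq, show |v i| = Real.sqrt (‖v i‖ ^ 2) by
    rw [Real.sqrt_sq_eq_abs]; simp]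
  exact Real.sqrt_le_sqrt (Finset.single_le_sum (f := fun j => ‖v j‖ ^ 2)
    (fun j _ => sq_nonneg _) (Finset.mem_univ i))

/-- The edges through `c'` and `c_puvq`, resp. `c'` and `c_pvwq`, make `O(δ)` angles with
the horizontal hyperplane: the `t`-component of each direction vector is at most `4δ` times
its norm (for `0 < δ < 1`). -/
theorem edges_almost_horizontal (Δ δ : ℝ) (hδ0 : 0 < δ) (hδ1 : δ < 1) :
    |(cpuvq Δ δ - c' Δ δ) 3| ≤ 4 * δ * ‖cpuvq Δ δ - c' Δ δ‖ ∧
    |(cpvwq Δ δ - c' Δ δ) 3| ≤ 4 * δ * ‖cpvwq Δ δ - c' Δ δ‖ := by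
  have hs : (1:ℝ) ≤ 1 + Real.sqrt 2 := le_add_of_nonneg_right (Real.sqrt_nonneg 2)
  constructor
  · have h2 := coord_le_norm (cpuvq Δ δ - c' Δ δ) 2
    have e2 : (cpuvq Δ δ - c' Δ δ) 2 = -(1/2) - δ^2/2 := by
      simp [cpuvq, c', pt, PiLp.sub_apply]
    have e3 : (cpuvq Δ δ - c' Δ δ) 3 = δ * (δ^2 + 1) / (1 + Real.sqrt 2) := by
      simp [cpuvq, c', pt, PiLp.sub_apply]
    rw [e2] at h2; rw [e3]
    have habs : |(-(1/2) : ℝ) - δ^2/2| = (1 + δ^2)/2 := by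
      rw [abs_of_nonpos (by nlinarith)]; ring
    rw [habs] at h2
    rw [abs_of_nonneg (by positivity)]
    calc δ * (δ^2 + 1) / (1 + Real.sqrt 2) ≤ δ * (δ^2 + 1) := by
          apply div_le_self (by positivity) hs
      _ = 4 * δ * ((1 + δ^2)/2) - δ * (δ^2 + 1) := by ring
      _ ≤ 4 * δ * ‖cpuvq Δ δ - c' Δ δ‖ - 0 := by
          gcongr <;> positivity
      _ = 4 * δ * ‖cpuvq Δ δ - c' Δ δ‖ := by ring
  · have h2 := coord_le_norm (cpvwq Δ δ - c' Δ δ) 2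
    have e2 : (cpvwq Δ δ - c' Δ δ) 2 = -(1/2) - δ^2/2 := by
      simp [cpvwq, c', pt, PiLp.sub_apply]
    have e3 : (cpvwq Δ δ - c' Δ δ) 3 = δ * (δ^2 + 1) := by
      simp [cpvwq, c', pt, PiLp.sub_apply]
    rw [e2] at h2; rw [e3]
    have habs : |(-(1/2) : ℝ) - δ^2/2| = (1 + δ^2)/2 := by
      rw [abs_of_nonpos (by nlinarith)]; ring
    rw [habs] at h2
    rw [abs_of_nonneg (by positivity)]
    calc δ * (δ^2 + 1) = 2 * δ * ((1 + δ^2)/2) := by ring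
      _ ≤ 4 * δ * ‖cpvwq Δ δ - c' Δ δ‖ := by
          have : (0:ℝ) ≤ δ := le_of_lt hδ0
          nlinarith [norm_nonneg (cpvwq Δ δ - c' Δ δ)]
end
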